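/- Let f be a stable polynomial with complex coefficients in variables z_1,…,z_d, and let f_ma denote its multi-affine part, i.e., the sum of those terms of f whose monomials are square-free (every variable appearing with exponent at most 1). Then f_ma is stable or identically zero. -/

import Mathlib

protected noncomputable def Complex.abs : AbsoluteValue ℂ ℝ := NormedField.toAbsoluteValue ℂ

protected lemma Complex.abs_ofReal (r : ℝ) : Complex.abs (r : ℂ) = |r| :=
  (Complex.norm_real r).trans (Real.norm_eq_abs r)

protected lemma Complex.abs_I : Complex.abs Complex.I = 1 := Complex.norm_I

protected lemma Complex.continuous_abs : Continuous Complex.abs := continuous_norm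

namespace S13

section Uni
open Polynomial Complex

lemma roots_im_nonpos {p : ℂ[X]} (hp : ∀ w : ℂ, 0 < w.im → p.eval w ≠ 0)
    {r : ℂ} (hr : r ∈ p.roots) : r.im ≤ 0 := by
  by_contra h
  exact hp r (lt_of_not_ge h) (isRoot_of_mem_roots hr)

lemma abs_I_mul_sub {r : ℂ} (hr : r.im ≤ 0) {y : ℝ} (hy : 0 < y) :
    y ≤ Complex.abs (Complex.I * y - r) := by
  have him : (Complex.I * y - r).im = y - r.im := by simp
  calc y ≤ |(Complex.I * y - r).im| := by rw [him, _root_.abs_of_nonneg (show (0:ℝ) ≤ y - r.im by linarith)]; linarith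
    _ ≤ Complex.abs (Complex.I * y - r) := Complex.abs_im_le_norm _

/-- product lower bound over a multiset of roots -/
lemma prod_abs_ge {s : Multiset ℂ} (hs : ∀ r ∈ s, r.im ≤ 0) {y : ℝ} (hy : 0 < y) :
    y ^ (Multiset.card s) ≤ (s.map (fun r => Complex.abs (Complex.I * y - r))).prod := by
  induction s using Multiset.induction_on with
  | empty => simp
  | cons r t ih =>
    simp only [Multiset.map_cons, Multiset.prod_cons, Multiset.card_cons, pow_succ]
    have h1 : y ≤ Complex.abs (Complex.I * y - r) := abs_I_mul_sub (hs r (Multiset.mem_cons_self r t)) hy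
    have h2 : y ^ (Multiset.card t) ≤ (t.map (fun r => Complex.abs (Complex.I * y - r))).prod :=
      ih (fun r hr => hs r (Multiset.mem_cons_of_mem hr))
    have hyn : (0:ℝ) ≤ y ^ (Multiset.card t) := le_of_lt (pow_pos hy _)
    calc y ^ Multiset.card t * y ≤ (t.map (fun r => Complex.abs (Complex.I * y - r))).prod * Complex.abs (Complex.I * y - r) :=
          mul_le_mul h2 h1 (le_of_lt hy) (le_trans hyn h2)
      _ = Complex.abs (Complex.I * y - r) * (t.map (fun r => Complex.abs (Complex.I * y - r))).prod := mul_comm _ _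

/-- Fact L1: coefficient bound from stability -/
lemma coeff_bound {p : ℂ[X]} (hp : ∀ w : ℂ, 0 < w.im → p.eval w ≠ 0)
    {N : ℕ} (hN : p.natDegree ≤ N) {y : ℝ} (hy : 0 < y) :
    Complex.abs (p.coeff N) * y ^ N ≤ Complex.abs (p.eval (Complex.I * y)) := by
  rcases eq_or_ne p 0 with rfl | hp0
  · simp
  rcases lt_or_eq_of_le hN with hlt | rfl
  · rw [Polynomial.coeff_eq_zero_of_natDegree_lt hlt]
    simp [apply_nonneg]
  have hsplit : Splits p := IsAlgClosed.splits p
  have hfac := hsplit.eq_prod_roots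
  have hcard : Multiset.card p.roots = p.natDegree := (Polynomial.splits_iff_card_roots).mp hsplit
  have heval : p.eval (Complex.I * y) =
      p.leadingCoeff * ((p.roots.map (fun a => X - C a)).map (eval (Complex.I * y))).prod := by
    conv_lhs => rw [hfac]
    rw [Polynomial.eval_mul, Polynomial.eval_C, Polynomial.eval_multiset_prod]
  have habs : Complex.abs (p.eval (Complex.I * y)) =
      Complex.abs p.leadingCoeff * (p.roots.map (fun r => Complex.abs (Complex.I * y - r))).prod := by
    rw [heval, map_mul]
    congr 1
    rw [map_multiset_prod (Complex.abs)]
    simp [Multiset.map_map, Function.comp]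
  rw [habs, Polynomial.coeff_natDegree, ← hcard]
  have := prod_abs_ge (fun r hr => roots_im_nonpos hp hr) hy (s := p.roots)
  have hlc : 0 ≤ Complex.abs p.leadingCoeff := apply_nonneg _ _
  exact mul_le_mul_of_nonneg_left this hlc

lemma prod_coeff_ratio {s : Multiset ℂ} (hs : ∀ r ∈ s, r.im ≤ 0 ∧ r ≠ 0) :
    ((s.map (fun a => X - C a)).prod.coeff 0 ≠ 0) ∧
    (((s.map (fun a => X - C a)).prod.coeff 1 / (s.map (fun a => X - C a)).prod.coeff 0).im ≤ 0) := by
  induction s using Multiset.induction_on with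
  | empty => norm_num [Polynomial.coeff_one]
  | cons r t ih =>
    obtain ⟨h0, h1⟩ := ih (fun a ha => hs a (Multiset.mem_cons_of_mem ha))
    obtain ⟨hrim, hr0⟩ := hs r (Multiset.mem_cons_self r t)
    set q := (t.map (fun a => X - C a)).prod with hq
    have hmul : ((r ::ₘ t).map (fun a => X - C a)).prod = (X - C r) * q := by
      rw [Multiset.map_cons, Multiset.prod_cons]
    have hc0 : ((X - C r) * q).coeff 0 = -r * q.coeff 0 := by
      rw [Polynomial.mul_coeff_zero]; simp
    have hc1 : ((X - C r) * q).coeff 1 = q.coeff 0 + (-r) * q.coeff 1 := by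
      rw [sub_mul, Polynomial.coeff_sub, Polynomial.coeff_X_mul, Polynomial.coeff_C_mul]
      ring
    rw [hmul, hc0, hc1]
    constructor
    · exact mul_ne_zero (neg_ne_zero.mpr hr0) h0
    · have key : (q.coeff 0 + -r * q.coeff 1) / (-r * q.coeff 0)
          = (-r)⁻¹ + q.coeff 1 / q.coeff 0 := by
        field_simp
        ring_nf
      rw [key]
      have him : ((-r)⁻¹).im ≤ 0 := by
        rw [Complex.inv_im]
        simp only [neg_im, neg_neg]
        apply div_nonpos_of_nonpos_of_nonneg hrim (Complex.normSq_nonneg _)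
      rw [Complex.add_im]
      linarith

/-- Fact U3 : for stable p with nonzero constant coefficient, the degree-1 truncation
is nonvanishing on the open upper half plane. -/
lemma trunc_ne_zero {p : ℂ[X]} (hp : ∀ w : ℂ, 0 < w.im → p.eval w ≠ 0)
    (h0 : p.coeff 0 ≠ 0) {w : ℂ} (hw : 0 < w.im) :
    p.coeff 0 + p.coeff 1 * w ≠ 0 := by
  have hp0 : p ≠ 0 := fun h => h0 (by simp [h])
  have hsplit : Splits p := IsAlgClosed.splits p
  have hfac := hsplit.eq_prod_roots
  set q := (p.roots.map (fun a => X - C a)).prod with hqdef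
  have hroots : ∀ r ∈ p.roots, r.im ≤ 0 ∧ r ≠ 0 := by
    intro r hr
    refine ⟨?_, ?_⟩
    · by_contra h
      exact hp r (lt_of_not_ge h) (isRoot_of_mem_roots hr)
    · rintro rfl
      have : p.eval 0 = 0 := isRoot_of_mem_roots hr
      rw [← Polynomial.coeff_zero_eq_eval_zero] at this
      exact h0 this
  obtain ⟨hq0, hq1⟩ := prod_coeff_ratio hroots
  have hc0 : p.coeff 0 = p.leadingCoeff * q.coeff 0 := by
    conv_lhs => rw [hfac]
    rw [Polynomial.coeff_C_mul]
  have hc1 : p.coeff 1 = p.leadingCoeff * q.coeff 1 := by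
    conv_lhs => rw [hfac]
    rw [Polynomial.coeff_C_mul]
  intro habs
  have hlc : p.leadingCoeff ≠ 0 := Polynomial.leadingCoeff_ne_zero.mpr hp0
  have hw0 : w ≠ 0 := fun h => by simp [h] at hw
  -- ratio equation : q.coeff 1 / q.coeff 0 = -1/w
  have hratio : q.coeff 1 / q.coeff 0 = -w⁻¹ := by
    rw [hc0, hc1] at habs
    have hsum : q.coeff 0 + q.coeff 1 * w = 0 := by
      have h2 : p.leadingCoeff * (q.coeff 0 + q.coeff 1 * w) = 0 := by linear_combination habs
      exact (mul_eq_zero.mp h2).resolve_left hlc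
    rw [div_eq_iff hq0]
    field_simp
    linear_combination hsum
  have : ((-w⁻¹ : ℂ)).im > 0 := by
    rw [Complex.neg_im, Complex.inv_im, neg_div, neg_neg]
    exact div_pos hw (Complex.normSq_pos.mpr hw0)
  rw [hratio] at hq1
  linarith

end Uni

section MV
open MvPolynomial Complex
variable {d : ℕ}

/-- split a monomial product at a variable -/
lemma prod_split (m : Fin d →₀ ℕ) (j : Fin d) (z : Fin d → ℂ) :
    (m.prod fun i e => z i ^ e) = z j ^ (m j) * ((m.erase j).prod fun i e => z i ^ e) := by
  conv_lhs => rw [← Finsupp.single_add_erase j m]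
  rw [Finsupp.prod_add_index (fun i _ => pow_zero (z i)) (fun i _ a b => pow_add (z i) a b)]
  congr 1
  exact Finsupp.prod_single_index (pow_zero (z j))

lemma erase_prod_congr (m : Fin d →₀ ℕ) (j : Fin d) {z z' : Fin d → ℂ}
    (h : ∀ i, i ≠ j → z i = z' i) :
    ((m.erase j).prod fun i e => z i ^ e) = ((m.erase j).prod fun i e => z' i ^ e) := by
  apply Finset.prod_congr rfl
  intro i hi
  have : i ≠ j := by
    by_contra hij
    subst hij
    simp [Finsupp.mem_support_iff, Finsupp.erase_same] at hi
  dsimp only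
  rw [h i this]

/-- restriction of `f` along variable `j` at base point `z` -/
noncomputable def res (f : MvPolynomial (Fin d) ℂ) (j : Fin d) (z : Fin d → ℂ) : Polynomial ℂ :=
  ∑ m ∈ f.support,
    Polynomial.C (coeff m f * ((m.erase j).prod fun i e => z i ^ e)) * Polynomial.X ^ (m j)

lemma res_eval (f : MvPolynomial (Fin d) ℂ) (j : Fin d) (z : Fin d → ℂ) (w : ℂ) :
    (res f j z).eval w = eval (Function.update z j w) f := by
  rw [res, Polynomial.eval_finset_sum, eval_eq]
  apply Finset.sum_congr rfl
  intro m _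
  rw [Polynomial.eval_mul, Polynomial.eval_C, Polynomial.eval_pow, Polynomial.eval_X]
  have : (∏ i ∈ m.support, Function.update z j w i ^ m i) = m.prod fun i e => Function.update z j w i ^ e := rfl
  rw [this, prod_split m j (Function.update z j w)]
  rw [Function.update_self]
  rw [erase_prod_congr m j (z := Function.update z j w) (z' := z)
    (fun i hij => Function.update_of_ne hij w z)]
  ring

/-- the slice polynomial : sum of monomials with exponent of `j` equal to `k`, with `X j` removed -/
noncomputable def sl (j : Fin d) (k : ℕ) (f : MvPolynomial (Fin d) ℂ) : MvPolynomial (Fin d) ℂ :=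
  ∑ m ∈ f.support.filter (fun m => m j = k), monomial (m.erase j) (coeff m f)

lemma sl_eval (j : Fin d) (k : ℕ) (f : MvPolynomial (Fin d) ℂ) (z : Fin d → ℂ) :
    eval z (sl j k f) = ∑ m ∈ f.support.filter (fun m => m j = k),
      coeff m f * ((m.erase j).prod fun i e => z i ^ e) := by
  rw [sl, map_sum]
  apply Finset.sum_congr rfl
  intro m _
  rw [eval_monomial]

lemma res_coeff (f : MvPolynomial (Fin d) ℂ) (j : Fin d) (z : Fin d → ℂ) (k : ℕ) :
    (res f j z).coeff k = eval z (sl j k f) := by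
  rw [res, Polynomial.finset_sum_coeff, sl_eval, Finset.sum_filter]
  apply Finset.sum_congr rfl
  intro m _
  rw [Polynomial.coeff_C_mul, Polynomial.coeff_X_pow]
  by_cases h : m j = k
  · simp [h]
  · have : ¬ (k = m j) := fun hh => h hh.symm
    simp [h, this]

lemma sl_eval_congr (j : Fin d) (k : ℕ) (f : MvPolynomial (Fin d) ℂ) {z z' : Fin d → ℂ}
    (h : ∀ i, i ≠ j → z i = z' i) : eval z (sl j k f) = eval z' (sl j k f) := by
  rw [sl_eval, sl_eval]
  exact Finset.sum_congr rfl fun m _ => by rw [erase_prod_congr m j h]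

lemma sl_ne_zero (j : Fin d) (k : ℕ) (f : MvPolynomial (Fin d) ℂ)
    {m₀ : Fin d →₀ ℕ} (hm₀ : m₀ ∈ f.support) (hk : m₀ j = k) : sl j k f ≠ 0 := by
  intro h
  have hmem : m₀ ∈ f.support.filter (fun m => m j = k) := Finset.mem_filter.mpr ⟨hm₀, hk⟩
  have : coeff (m₀.erase j) (sl j k f) = coeff m₀ f := by
    rw [sl, MvPolynomial.coeff_sum]
    rw [Finset.sum_eq_single m₀]
    · rw [coeff_monomial]; simp
    · intro m hm hne
      rw [coeff_monomial]
      have hee : Finsupp.erase j m ≠ Finsupp.erase j m₀ := by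
        intro he
        apply hne
        ext i
        by_cases hij : i = j
        · subst hij; rw [hk, (Finset.mem_filter.mp hm).2]
        · calc m i = (Finsupp.erase j m) i := (Finsupp.erase_ne hij).symm
            _ = (Finsupp.erase j m₀) i := by rw [he]
            _ = m₀ i := Finsupp.erase_ne hij
      simp [hee]
    · intro hnot; exact absurd hmem hnot
  rw [h] at this
  simp at this
  exact (MvPolynomial.mem_support_iff.mp hm₀) this.symm

lemma sum_C_mul_X_pow_coeff (a : ℕ → ℂ) (N k : ℕ) :
    (∑ i ∈ Finset.range N, Polynomial.C (a i) * Polynomial.X ^ i).coeff k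
      = if k < N then a k else 0 := by
  rw [Polynomial.finset_sum_coeff]
  have h : ∀ i ∈ Finset.range N, (Polynomial.C (a i) * Polynomial.X ^ i).coeff k
      = if i = k then a i else 0 := by
    intro i _
    rw [Polynomial.coeff_C_mul, Polynomial.coeff_X_pow]
    by_cases hik : i = k
    · simp [hik]
    · simp [hik, Ne.symm hik]
  rw [Finset.sum_congr rfl h, Finset.sum_ite_eq' (Finset.range N) k a]
  simp [Finset.mem_range]

lemma neg_inv_im {w : ℂ} (hw : 0 < w.im) : 0 < (-w⁻¹).im := by
  rw [Complex.neg_im, Complex.inv_im, neg_div, neg_neg]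
  exact div_pos hw (Complex.normSq_pos.mpr (fun h => by simp [h] at hw))

/-- key inequality : lowest-slice bound -/
lemma key_ineq (f : MvPolynomial (Fin d) ℂ) (j : Fin d)
    (hf : ∀ z : Fin d → ℂ, (∀ i, 0 < (z i).im) → eval z f ≠ 0)
    {k₀ : ℕ} (hmin : ∀ m ∈ f.support, k₀ ≤ m j) (hk₀ : k₀ ≤ degreeOf j f)
    (z : Fin d → ℂ) (hz : ∀ i, i ≠ j → 0 < (z i).im) {y : ℝ} (hy : 0 < y) :
    Complex.abs (eval z (sl j k₀ f)) ≤
      y ^ k₀ * Complex.abs (eval (Function.update z j (Complex.I / y)) f) := by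
  set n := degreeOf j f with hn
  set p := res f j z with hp
  have hpdeg : p.natDegree ≤ n := by
    rw [Polynomial.natDegree_le_iff_coeff_eq_zero]
    intro N hN
    rw [hp, res_coeff]
    have : sl j N f = 0 := by
      rw [sl]
      apply Finset.sum_eq_zero
      intro m hm
      exfalso
      have := (Finset.mem_filter.mp hm).2
      have hle : m j ≤ n := by
        rw [hn, degreeOf_eq_sup]
        exact Finset.le_sup (f := fun m => m j) (Finset.mem_filter.mp hm).1
      omega
    rw [this, map_zero]
  have hsl0 : ∀ k < k₀, p.coeff k = 0 := by
    intro k hk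
    rw [hp, res_coeff]
    have : sl j k f = 0 := by
      rw [sl]
      apply Finset.sum_eq_zero
      intro m hm
      exfalso
      have h2 := (Finset.mem_filter.mp hm).2
      have := hmin m (Finset.mem_filter.mp hm).1
      omega
    rw [this, map_zero]
  have hpstab : ∀ w : ℂ, 0 < w.im → p.eval w ≠ 0 := by
    intro w hw
    rw [hp, res_eval]
    apply hf
    intro i
    by_cases hij : i = j
    · subst hij; rw [Function.update_self]; exact hw
    · rw [Function.update_of_ne hij]; exact hz i hij
  -- reversal
  set q := ∑ k ∈ Finset.range (n+1), Polynomial.C ((-1:ℂ)^(n-k) * p.coeff (n-k)) * Polynomial.X ^ k with hq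
  have hqcoeff : ∀ k, q.coeff k = if k < n+1 then (-1:ℂ)^(n-k) * p.coeff (n-k) else 0 := by
    intro k; rw [hq]; exact sum_C_mul_X_pow_coeff _ _ _
  have hqrev : ∀ w : ℂ, w ≠ 0 → q.eval w = w ^ n * p.eval (-w⁻¹) := by
    intro w hw
    rw [hq, Polynomial.eval_finset_sum]
    rw [Polynomial.eval_eq_sum_range' (lt_of_le_of_lt hpdeg (Nat.lt_succ_self n)) (-w⁻¹)]
    rw [Finset.mul_sum]
    rw [← Finset.sum_range_reflect]
    apply Finset.sum_congr rfl
    intro k hk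
    have hkn : k ≤ n := Nat.lt_succ_iff.mp (Finset.mem_range.mp hk)
    rw [Polynomial.eval_mul, Polynomial.eval_C, Polynomial.eval_pow, Polynomial.eval_X]
    have h1 : n + 1 - 1 - k = n - k := by omega
    rw [h1]
    have hnk : n - (n - k) = k := by omega
    rw [hnk]
    have hwk : w ^ (n - k) * w ^ k = w ^ n := by rw [← pow_add]; congr 1; omega
    have hwk' : w ^ n * (w ^ k)⁻¹ = w ^ (n - k) := by
      rw [← hwk, mul_assoc, mul_inv_cancel₀ (pow_ne_zero k hw), mul_one]
    rw [neg_pow (w⁻¹), inv_pow, ← hwk']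
    ring
  have hqstab : ∀ w : ℂ, 0 < w.im → q.eval w ≠ 0 := by
    intro w hw
    have hw0 : w ≠ 0 := fun h => by simp [h] at hw
    rw [hqrev w hw0]
    exact mul_ne_zero (pow_ne_zero _ hw0) (hpstab _ (neg_inv_im hw))
  have hqdeg : q.natDegree ≤ n - k₀ := by
    rw [Polynomial.natDegree_le_iff_coeff_eq_zero]
    intro N hN
    rw [hqcoeff N]
    by_cases h : N < n + 1
    · rw [if_pos h, hsl0 (n - N) (by omega), mul_zero]
    · rw [if_neg h]
  have hbound := coeff_bound hqstab hqdeg hy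
  have hcoeffq : Complex.abs (q.coeff (n - k₀)) = Complex.abs (p.coeff k₀) := by
    rw [hqcoeff, if_pos (by omega : n - k₀ < n + 1)]
    have : n - (n - k₀) = k₀ := by omega
    rw [this, map_mul, map_pow, map_neg_eq_map, map_one, one_pow, one_mul]
  have hIy : (Complex.I : ℂ) * y ≠ 0 := by
    apply mul_ne_zero Complex.I_ne_zero
    exact_mod_cast ne_of_gt hy
  have hqI : Complex.abs (q.eval (Complex.I * y)) = y ^ n * Complex.abs (p.eval (Complex.I / y)) := by
    rw [hqrev _ hIy]
    have : -((Complex.I : ℂ) * y)⁻¹ = Complex.I / y := by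
      rw [mul_inv, Complex.inv_I]
      field_simp
    rw [this, map_mul, map_pow, map_mul, Complex.abs_I, Complex.abs_ofReal, one_mul,
      abs_of_pos hy]
  rw [hcoeffq, hqI] at hbound
  -- now divide by y^(n-k₀)
  have hyk : (0:ℝ) < y ^ (n - k₀) := pow_pos hy _
  have hpk : p.coeff k₀ = eval z (sl j k₀ f) := by rw [hp, res_coeff]
  have hpe : p.eval (Complex.I / y) = eval (Function.update z j (Complex.I / y)) f := by
    rw [hp, res_eval]
  rw [hpk, hpe] at hbound
  have hyn : y ^ n = y ^ k₀ * y ^ (n - k₀) := by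
    rw [← pow_add]
    congr 1
    omega
  rw [hyn, mul_assoc, mul_comm (y ^ (n - k₀)), ← mul_assoc] at hbound
  exact le_of_mul_le_mul_right hbound hyk

end MV


section MV2
open MvPolynomial Complex
variable {d : ℕ}

lemma eval_polyComp (g : MvPolynomial (Fin d) ℂ) (gens : Fin d → Polynomial ℂ) (s : ℂ) :
    Polynomial.eval s (MvPolynomial.aeval gens g) =
      MvPolynomial.eval (fun i => Polynomial.eval s (gens i)) g := by
  induction g using MvPolynomial.induction_on with
  | C a => simp
  | add p q hp hq => simp [hp, hq]
  | mul_X p i hp => simp [hp]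

lemma im_I_div {y : ℝ} (hy : 0 < y) : 0 < (Complex.I / (y:ℂ)).im := by
  rw [div_eq_mul_inv, ← Complex.ofReal_inv]
  simp [Complex.mul_im]
  positivity

end MV2


section MV3
open MvPolynomial Complex Metric
variable {d : ℕ}

lemma res_natDegree_le (f : MvPolynomial (Fin d) ℂ) (j : Fin d) (z : Fin d → ℂ) :
    (res f j z).natDegree ≤ degreeOf j f := by
  rw [Polynomial.natDegree_le_iff_coeff_eq_zero]
  intro N hN
  rw [res_coeff]
  have hslz : sl j N f = 0 := by
    rw [sl]
    apply Finset.sum_eq_zero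
    intro m hm
    exfalso
    have h2 := (Finset.mem_filter.mp hm).2
    have hle : m j ≤ degreeOf j f := by
      rw [degreeOf_eq_sup]
      exact Finset.le_sup (f := fun m => m j) (Finset.mem_filter.mp hm).1
    omega
  rw [hslz, map_zero]

/-- **Main analytic lemma**: the lowest slice of a stable polynomial in variable `j`
is nonvanishing on the open upper polydisc. -/
lemma lowest_slice_ne_zero (f : MvPolynomial (Fin d) ℂ) (j : Fin d)
    (hf : ∀ z : Fin d → ℂ, (∀ i, 0 < (z i).im) → eval z f ≠ 0)
    {k₀ : ℕ} (hmin : ∀ m ∈ f.support, k₀ ≤ m j)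
    (hex : ∃ m ∈ f.support, m j = k₀) :
    ∀ ζ : Fin d → ℂ, (∀ i, 0 < (ζ i).im) → eval ζ (sl j k₀ f) ≠ 0 := by
  intro ζ hζ hzero
  obtain ⟨m₀, hm₀, hm₀j⟩ := hex
  set g := sl j k₀ f with hg
  have hk₀deg : k₀ ≤ degreeOf j f := by
    rw [degreeOf_eq_sup]
    rw [← hm₀j]
    exact Finset.le_sup (f := fun m => m j) hm₀
  have hgne : g ≠ 0 := sl_ne_zero j k₀ f hm₀ hm₀j
  -- a point where g is nonzero
  have hzstar : ∃ x : Fin d → ℂ, eval x g ≠ 0 := by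
    by_contra h
    push_neg at h
    exact hgne (MvPolynomial.funext (fun x => by rw [h x]; simp))
  obtain ⟨zs, hzs⟩ := hzstar
  set v : Fin d → ℂ := fun i => if i = j then 0 else zs i - ζ i with hv
  set line : ℂ → (Fin d → ℂ) := fun s i => ζ i + v i * s with hline
  -- radius
  have hune : (Finset.univ : Finset (Fin d)).Nonempty := ⟨j, Finset.mem_univ j⟩
  set ε := Finset.univ.inf' hune (fun i => (ζ i).im) with hε
  have hεpos : 0 < ε := by
    rw [hε, Finset.lt_inf'_iff]
    intro i _
    exact hζ i
  set B := Finset.univ.sup' hune (fun i => Complex.abs (v i)) with hB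
  have hB0 : 0 ≤ B := le_trans (apply_nonneg Complex.abs (v j))
    (Finset.le_sup' (fun i => Complex.abs (v i)) (Finset.mem_univ j))
  set ρ := ε / (B + 1) with hρ
  have hρpos : 0 < ρ := div_pos hεpos (by linarith)
  have hball : ∀ s : ℂ, Complex.abs s < ρ → ∀ i, 0 < (line s i).im := by
    intro s hs i
    have h1 : Complex.abs (v i * s) ≤ B * ρ := by
      rw [map_mul]
      apply mul_le_mul (Finset.le_sup' (fun i => Complex.abs (v i)) (Finset.mem_univ i))
        (le_of_lt hs) (apply_nonneg _ _) hB0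
    have h2 : B * ρ < ε := by
      have hcalc : B * ρ = ε * (B / (B + 1)) := by rw [hρ]; ring
      rw [hcalc]
      have hlt : B / (B + 1) < 1 := (div_lt_one (by linarith)).mpr (by linarith)
      calc ε * (B / (B + 1)) < ε * 1 := by
            exact mul_lt_mul_of_pos_left hlt hεpos
        _ = ε := mul_one ε
    have h3 : -(Complex.abs (v i * s)) ≤ (v i * s).im :=
      (abs_le.mp (Complex.abs_im_le_norm _)).1
    have h4 : ε ≤ (ζ i).im := Finset.inf'_le _ (Finset.mem_univ i)
    have : (line s i).im = (ζ i).im + (v i * s).im := by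
      rw [hline]
      simp [Complex.add_im]
    rw [this]
    linarith
  -- the line polynomial for g
  set Q : Polynomial ℂ := MvPolynomial.aeval
    (fun i => Polynomial.C (ζ i) + Polynomial.C (v i) * Polynomial.X) g with hQ
  have hQeval : ∀ s : ℂ, Q.eval s = eval (line s) g := by
    intro s
    rw [hQ, eval_polyComp]
    have hpt : (fun i => Polynomial.eval s (Polynomial.C (ζ i) + Polynomial.C (v i) * Polynomial.X))
        = line s := by
      funext i
      simp [hline]
    rw [hpt]
  have hQ1 : Q.eval 1 = eval zs g := by
    rw [hQeval]
    apply sl_eval_congr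
    intro i hij
    show ζ i + v i * 1 = zs i
    rw [hv]
    simp [hij]
  have hQne : Q ≠ 0 := by
    intro h
    rw [h, Polynomial.eval_zero] at hQ1
    exact hzs hQ1.symm
  -- choose a real point s₁ avoiding the roots of Q
  have hroots : {x : ℂ | Q.IsRoot x}.Finite := Polynomial.finite_setOf_isRoot hQne
  have hTfin : ((fun t : ℝ => (t:ℂ)) ⁻¹' {x : ℂ | Q.IsRoot x}).Finite :=
    hroots.preimage (Complex.ofReal_injective.injOn)
  have hIoo : (Set.Ioo (0:ℝ) (ρ/4)).Infinite := Set.Ioo_infinite (by linarith)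
  obtain ⟨t, ht⟩ := (hIoo.diff hTfin).nonempty
  obtain ⟨⟨ht0, htρ⟩, htroot⟩ := ht
  set s₁ : ℂ := (t:ℂ) with hs₁def
  have hs₁abs : Complex.abs s₁ < ρ := by
    rw [hs₁def, Complex.abs_ofReal, abs_of_pos ht0]; linarith
  have hc₁ : Q.eval s₁ ≠ 0 := fun h => htroot h
  set z₁ : Fin d → ℂ := line s₁ with hz₁
  set c₁ : ℂ := Q.eval s₁ with hc
  set n := degreeOf j f with hn
  set p₁ := res f j z₁ with hp₁
  have hp₁coeff : p₁.coeff k₀ = c₁ := by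
    rw [hp₁, res_coeff, hc, hQeval]
  have hp₁eval : ∀ w : ℂ, p₁.eval w = eval (Function.update z₁ j w) f := fun w => res_eval f j z₁ w
  -- Schwarz estimate, for every y > 0
  have schwarz : ∀ y : ℝ, 0 < y →
      Complex.abs (c₁ / (((y:ℂ))^k₀ * p₁.eval (Complex.I / y))) ≤ 2 / ρ * t := by
    intro y hy
    set Fy : Polynomial ℂ := MvPolynomial.aeval (fun i => if i = j then Polynomial.C (Complex.I / y)
      else Polynomial.C (ζ i) + Polynomial.C (v i) * Polynomial.X) f with hFy
    have hFyeval : ∀ s : ℂ, Fy.eval s = eval (Function.update (line s) j (Complex.I / y)) f := by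
      intro s
      rw [hFy, eval_polyComp]
      have hpt : (fun i => Polynomial.eval s (if i = j then Polynomial.C (Complex.I / (y:ℂ))
          else Polynomial.C (ζ i) + Polynomial.C (v i) * Polynomial.X))
          = Function.update (line s) j (Complex.I / (y:ℂ)) := by
        funext i
        by_cases hij : i = j
        · subst hij; simp
        · simp [hij, Function.update_of_ne hij, hline]
      rw [hpt]
    set ψ : ℂ → ℂ := fun s => Q.eval s / (((y:ℂ))^k₀ * Fy.eval s) with hψ
    have hyC : ((y:ℂ)) ≠ 0 := by exact_mod_cast ne_of_gt hy
    have hupd : ∀ s : ℂ, Complex.abs s < ρ → (∀ i, 0 < ((Function.update (line s) j (Complex.I / y)) i).im) := by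
      intro s hs i
      by_cases hij : i = j
      · subst hij; rw [Function.update_self]; exact im_I_div hy
      · rw [Function.update_of_ne hij]; exact hball s hs i
    have hden : ∀ s : ℂ, Complex.abs s < ρ → (((y:ℂ))^k₀ * Fy.eval s) ≠ 0 := by
      intro s hs
      exact mul_ne_zero (pow_ne_zero _ hyC) (by rw [hFyeval]; exact hf _ (hupd s hs))
    have hdiff : DifferentiableOn ℂ ψ (Metric.ball (0:ℂ) ρ) := by
      apply DifferentiableOn.div
      · exact (Q.differentiable).differentiableOn
      · exact (((Fy.differentiable).differentiableOn).const_mul _)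
      · intro s hs
        exact hden s (by show ‖s‖ < ρ; simpa [Complex.dist_eq] using Metric.mem_ball.mp hs)
    have hψ0 : ψ 0 = 0 := by
      rw [hψ]
      have : Q.eval 0 = 0 := by
        rw [hQeval]
        have : line 0 = ζ := by funext i; show ζ i + v i * 0 = ζ i; ring
        rw [this]
        exact hzero
      simp [this]
    have hmaps : Set.MapsTo ψ (Metric.ball (0:ℂ) ρ) (Metric.ball (ψ 0) 2) := by
      intro s hs
      have hsρ : Complex.abs s < ρ := by show ‖s‖ < ρ; simpa [Complex.dist_eq] using Metric.mem_ball.mp hs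
      have hkey := key_ineq f j hf hmin hk₀deg (line s) (fun i _ => hball s hsρ i) hy
      rw [Metric.mem_ball, hψ0, Complex.dist_eq, sub_zero, hψ]
      have habs_den : Complex.abs (((y:ℂ))^k₀ * Fy.eval s)
          = y^k₀ * Complex.abs (eval (Function.update (line s) j (Complex.I / y)) f) := by
        rw [map_mul, map_pow, Complex.abs_ofReal, abs_of_pos hy, hFyeval]
      have h1 : Complex.abs (Q.eval s / (((y:ℂ))^k₀ * Fy.eval s)) ≤ 1 := by
        rw [map_div₀, habs_den]
        rw [div_le_one_iff]
        left
        constructor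
        · have h2 : Complex.abs (((y:ℂ))^k₀ * Fy.eval s) > 0 :=
            Complex.abs.pos (hden s hsρ)
          rw [habs_den] at h2
          exact h2
        · rw [hQeval]
          exact hkey
      show ‖Q.eval s / (((y:ℂ))^k₀ * Fy.eval s)‖ < 2
      have h1' : ‖Q.eval s / (((y:ℂ))^k₀ * Fy.eval s)‖ ≤ 1 := h1
      linarith
    have hs₁mem : s₁ ∈ Metric.ball (0:ℂ) ρ := by
      rw [Metric.mem_ball, Complex.dist_eq, sub_zero]
      exact hs₁abs
    have hS := Complex.dist_le_div_mul_dist_of_mapsTo_ball hdiff (hmaps.mono_right Metric.ball_subset_closedBall) hs₁mem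
    rw [hψ0, Complex.dist_eq, sub_zero, Complex.dist_eq, sub_zero] at hS
    have hψs₁ : ψ s₁ = c₁ / (((y:ℂ))^k₀ * p₁.eval (Complex.I / y)) := by
      simp only [hψ]
      rw [hc, hp₁eval, hFyeval, hz₁]
    rw [hψs₁] at hS
    have habs_s₁ : Complex.abs s₁ = t := by
      rw [hs₁def, Complex.abs_ofReal, abs_of_pos ht0]
    rw [show ‖s₁‖ = t from habs_s₁] at hS
    exact hS
  -- the limit y → ∞
  have hk₀n : k₀ ≤ n := hk₀deg
  have hp₁deg : p₁.natDegree < n + 1 := by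
    apply Nat.lt_succ_of_le
    rw [hp₁, hn]
    exact res_natDegree_le f j z₁
  have hlow : ∀ k < k₀, p₁.coeff k = 0 := by
    intro k hk
    rw [hp₁, res_coeff]
    have hslz : sl j k f = 0 := by
      rw [sl]
      apply Finset.sum_eq_zero
      intro m hm
      exfalso
      have h2 := (Finset.mem_filter.mp hm).2
      have := hmin m (Finset.mem_filter.mp hm).1
      omega
    rw [hslz, map_zero]
  have hDlim : Filter.Tendsto (fun y : ℝ => ((y:ℂ))^k₀ * p₁.eval (Complex.I / y))
      Filter.atTop (nhds (c₁ * Complex.I ^ k₀)) := by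
    have hrw : (fun y : ℝ => ((y:ℂ))^k₀ * p₁.eval (Complex.I / y))
        = fun y : ℝ => ∑ k ∈ Finset.range (n+1), p₁.coeff k * (((y:ℂ))^k₀ * (Complex.I / y)^k) := by
      funext y
      rw [Polynomial.eval_eq_sum_range' hp₁deg, Finset.mul_sum]
      apply Finset.sum_congr rfl
      intro k _
      ring
    rw [hrw]
    have hsum : (c₁ * Complex.I ^ k₀)
        = ∑ k ∈ Finset.range (n+1), (if k = k₀ then c₁ * Complex.I ^ k₀ else 0) := by
      rw [Finset.sum_ite_eq' (Finset.range (n+1)) k₀ (fun _ => c₁ * Complex.I ^ k₀)]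
      rw [if_pos (Finset.mem_range.mpr (Nat.lt_succ_of_le hk₀n))]
    rw [hsum]
    apply tendsto_finset_sum
    intro k _
    rcases lt_trichotomy k k₀ with hlt | heq | hgt
    · rw [if_neg (ne_of_lt hlt), hlow k hlt]
      simpa using tendsto_const_nhds
    · subst heq
      rw [if_pos rfl]
      apply Filter.Tendsto.congr' (f₁ := fun _ : ℝ => c₁ * Complex.I ^ k)
      · filter_upwards [Filter.eventually_gt_atTop (0:ℝ)] with y hy
        have hyC : ((y:ℂ)) ≠ 0 := by exact_mod_cast ne_of_gt hy
        rw [hp₁coeff]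
        congr 1
        rw [← mul_pow]
        congr 1
        field_simp
      · exact tendsto_const_nhds
    · rw [if_neg (ne_of_gt hgt)]
      have hinv : Filter.Tendsto (fun y : ℝ => ((y:ℂ))⁻¹) Filter.atTop (nhds 0) := by
        have h1 : Filter.Tendsto (fun y : ℝ => y⁻¹) Filter.atTop (nhds 0) := tendsto_inv_atTop_zero
        have h2 := (Complex.continuous_ofReal.tendsto (0:ℝ)).comp h1
        rw [Complex.ofReal_zero] at h2
        exact h2.congr (fun y => by simp [Function.comp, Complex.ofReal_inv])
      have hpow : Filter.Tendsto (fun y : ℝ => (((y:ℂ))⁻¹)^(k - k₀)) Filter.atTop (nhds 0) := by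
        have := hinv.pow (k - k₀)
        rwa [zero_pow (by omega : k - k₀ ≠ 0)] at this
      have hmul := hpow.const_mul (p₁.coeff k * Complex.I ^ k)
      rw [mul_zero] at hmul
      apply Filter.Tendsto.congr' (f₁ := fun y : ℝ => (p₁.coeff k * Complex.I ^ k) * (((y:ℂ))⁻¹)^(k - k₀))
      · filter_upwards [Filter.eventually_gt_atTop (0:ℝ)] with y hy
        have hyC : ((y:ℂ)) ≠ 0 := by exact_mod_cast ne_of_gt hy
        have hsplit : ((y:ℂ))^k = ((y:ℂ))^k₀ * ((y:ℂ))^(k - k₀) := by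
          rw [← pow_add]
          congr 1
          omega
        rw [div_pow, hsplit]
        field_simp
        ring_nf
        rw [mul_assoc, ← mul_pow, mul_inv_cancel₀ hyC, one_pow, mul_one]
      · exact hmul
  have hc₁I : c₁ * Complex.I ^ k₀ ≠ 0 := mul_ne_zero hc₁ (pow_ne_zero _ Complex.I_ne_zero)
  have hψlim : Filter.Tendsto (fun y : ℝ => c₁ / (((y:ℂ))^k₀ * p₁.eval (Complex.I / y)))
      Filter.atTop (nhds (c₁ / (c₁ * Complex.I ^ k₀))) :=
    Filter.Tendsto.div tendsto_const_nhds hDlim hc₁I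
  have habslim : Filter.Tendsto (fun y : ℝ => Complex.abs (c₁ / (((y:ℂ))^k₀ * p₁.eval (Complex.I / y))))
      Filter.atTop (nhds (Complex.abs (c₁ / (c₁ * Complex.I ^ k₀)))) :=
    (Complex.continuous_abs.tendsto _).comp hψlim
  have habsval : Complex.abs (c₁ / (c₁ * Complex.I ^ k₀)) = 1 := by
    rw [map_div₀, map_mul, map_pow, Complex.abs_I, one_pow, mul_one]
    exact div_self (Complex.abs.ne_zero hc₁)
  have hfinal : Complex.abs (c₁ / (c₁ * Complex.I ^ k₀)) ≤ 2 / ρ * t := by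
    apply le_of_tendsto habslim
    filter_upwards [Filter.eventually_gt_atTop (0:ℝ)] with y hy
    exact schwarz y hy
  rw [habsval] at hfinal
  have h2ρt : 2 / ρ * t < 1 / 2 := by
    have h1 : 2 / ρ * t < 2 / ρ * (ρ / 4) :=
      mul_lt_mul_of_pos_left htρ (div_pos two_pos hρpos)
    have h2 : 2 / ρ * (ρ / 4) = 1 / 2 := by field_simp; ring
    linarith
  linarith

end MV3

section ASM
open MvPolynomial Complex
variable {d : ℕ}

noncomputable def maff (S : Finset (Fin d)) (f : MvPolynomial (Fin d) ℂ) : MvPolynomial (Fin d) ℂ :=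
  ∑ m ∈ f.support.filter (fun m => ∀ i ∈ S, m i ≤ 1), monomial m (coeff m f)

lemma maff_coeff (S : Finset (Fin d)) (f : MvPolynomial (Fin d) ℂ) (m : Fin d →₀ ℕ) :
    coeff m (maff S f) = if (∀ i ∈ S, m i ≤ 1) then coeff m f else 0 := by
  rw [maff, MvPolynomial.coeff_sum]
  have h : ∀ m' ∈ f.support.filter (fun m => ∀ i ∈ S, m i ≤ 1),
      coeff m (monomial m' (coeff m' f)) = if m' = m then coeff m' f else 0 := by
    intro m' _
    rw [coeff_monomial]
  rw [Finset.sum_congr rfl h, Finset.sum_ite_eq' _ m (fun m' => coeff m' f)]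
  by_cases hmem : m ∈ f.support.filter (fun m => ∀ i ∈ S, m i ≤ 1)
  · rw [if_pos hmem, if_pos (Finset.mem_filter.mp hmem).2]
  · rw [if_neg hmem]
    by_cases hcond : ∀ i ∈ S, m i ≤ 1
    · rw [if_pos hcond]
      by_cases hsupp : m ∈ f.support
      · exact absurd (Finset.mem_filter.mpr ⟨hsupp, hcond⟩) hmem
      · exact (MvPolynomial.notMem_support_iff.mp hsupp).symm
    · rw [if_neg hcond]

lemma maff_empty (f : MvPolynomial (Fin d) ℂ) : maff ∅ f = f := by
  rw [maff]
  have : f.support.filter (fun m => ∀ i ∈ (∅ : Finset (Fin d)), m i ≤ 1) = f.support :=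
    Finset.filter_true_of_mem (fun m _ => by simp)
  rw [this]
  exact MvPolynomial.support_sum_monomial_coeff f

lemma maff_insert (jj : Fin d) (S : Finset (Fin d)) (f : MvPolynomial (Fin d) ℂ) :
    maff (insert jj S) f = maff {jj} (maff S f) := by
  apply MvPolynomial.ext
  intro m
  rw [maff_coeff, maff_coeff, maff_coeff]
  by_cases h1 : m jj ≤ 1 <;> by_cases h2 : ∀ i ∈ S, m i ≤ 1 <;>
    simp [Finset.forall_mem_insert, h1, h2]

lemma maff_zero (S : Finset (Fin d)) : maff S (0 : MvPolynomial (Fin d) ℂ) = 0 := by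
  rw [maff]
  simp

lemma maff_single_eval (F : MvPolynomial (Fin d) ℂ) (j : Fin d) (z : Fin d → ℂ) :
    eval z (maff {j} F) = eval z (sl j 0 F) + z j * eval z (sl j 1 F) := by
  rw [maff, map_sum]
  have hdisj : Disjoint (F.support.filter (fun m => m j = 0)) (F.support.filter (fun m => m j = 1)) := by
    rw [Finset.disjoint_left]
    intro m hm0 hm1
    have h0 := (Finset.mem_filter.mp hm0).2
    have h1 := (Finset.mem_filter.mp hm1).2
    omega
  have hcond : F.support.filter (fun m => ∀ i ∈ ({j} : Finset (Fin d)), m i ≤ 1)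
      = F.support.filter (fun m => m j = 0) ∪ F.support.filter (fun m => m j = 1) := by
    ext m
    simp only [Finset.mem_filter, Finset.mem_union, Finset.mem_singleton]
    constructor
    · rintro ⟨hm, hle⟩
      have := hle j rfl
      rcases (by omega : m j = 0 ∨ m j = 1) with h | h
      · exact Or.inl ⟨hm, h⟩
      · exact Or.inr ⟨hm, h⟩
    · rintro (⟨hm, h⟩ | ⟨hm, h⟩) <;> exact ⟨hm, fun i hi => by subst hi; omega⟩
  rw [hcond, Finset.sum_union hdisj, sl_eval, sl_eval, Finset.mul_sum]
  congr 1
  · apply Finset.sum_congr rfl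
    intro m hm
    rw [eval_monomial, prod_split m j z, (Finset.mem_filter.mp hm).2]
    ring
  · apply Finset.sum_congr rfl
    intro m hm
    rw [eval_monomial, prod_split m j z, (Finset.mem_filter.mp hm).2]
    ring

/-- single variable truncation preserves stable-or-zero -/
lemma trunc_single (F : MvPolynomial (Fin d) ℂ) (j : Fin d)
    (hF : ∀ z : Fin d → ℂ, (∀ i, 0 < (z i).im) → eval z F ≠ 0) :
    (∀ z : Fin d → ℂ, (∀ i, 0 < (z i).im) → eval z (maff {j} F) ≠ 0) ∨ maff {j} F = 0 := by
  have hFne : F ≠ 0 := by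
    intro h
    have h2 := hF (fun _ => Complex.I) (fun i => by simp)
    rw [h] at h2
    simp at h2
  have hsupp : F.support.Nonempty :=
    Finset.nonempty_iff_ne_empty.mpr (fun h => hFne (MvPolynomial.support_eq_empty.mp h))
  have hKne : (F.support.image (fun m => m j)).Nonempty := hsupp.image _
  set k₀ := (F.support.image (fun m => m j)).min' hKne with hk₀
  have hmin : ∀ m ∈ F.support, k₀ ≤ m j := fun m hm =>
    Finset.min'_le _ _ (Finset.mem_image_of_mem _ hm)
  have hexm : ∃ m ∈ F.support, m j = k₀ := by
    have hmem := (F.support.image (fun m => m j)).min'_mem hKne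
    rw [← hk₀] at hmem
    obtain ⟨m, hm, hmj⟩ := Finset.mem_image.mp hmem
    exact ⟨m, hm, hmj⟩
  rcases lt_or_ge k₀ 2 with hk2 | hk2
  · left
    intro z hz
    rw [maff_single_eval]
    have hL := lowest_slice_ne_zero F j hF hmin hexm z hz
    have hpstab : ∀ w : ℂ, 0 < w.im → (res F j z).eval w ≠ 0 := by
      intro w hw
      rw [res_eval]
      apply hF
      intro i
      by_cases hij : i = j
      · subst hij; rw [Function.update_self]; exact hw
      · rw [Function.update_of_ne hij]; exact hz i
    rcases (by omega : k₀ = 0 ∨ k₀ = 1) with h0 | h1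
    · rw [h0] at hL
      have hc0 : (res F j z).coeff 0 ≠ 0 := by rw [res_coeff]; exact hL
      have := trunc_ne_zero hpstab hc0 (hz j)
      rw [res_coeff, res_coeff] at this
      intro habs
      apply this
      rw [← habs]
      ring
    · rw [h1] at hL
      have hsl0 : sl j 0 F = 0 := by
        rw [sl]
        apply Finset.sum_eq_zero
        intro m hm
        exfalso
        have h2 := (Finset.mem_filter.mp hm).2
        have := hmin m (Finset.mem_filter.mp hm).1
        omega
      rw [hsl0, map_zero, zero_add]
      apply mul_ne_zero _ hL
      intro hzj
      have h3 := hz j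
      rw [hzj] at h3
      simp at h3
  · right
    rw [maff]
    apply Finset.sum_eq_zero
    intro m hm
    exfalso
    have h2 := (Finset.mem_filter.mp hm).2 j (Finset.mem_singleton_self j)
    have := hmin m (Finset.mem_filter.mp hm).1
    omega

lemma trunc_all (f : MvPolynomial (Fin d) ℂ)
    (hf : ∀ z : Fin d → ℂ, (∀ i, 0 < (z i).im) → eval z f ≠ 0) (S : Finset (Fin d)) :
    (∀ z : Fin d → ℂ, (∀ i, 0 < (z i).im) → eval z (maff S f) ≠ 0) ∨ maff S f = 0 := by
  induction S using Finset.induction_on with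
  | empty => left; rw [maff_empty]; exact hf
  | @insert j S hjS ih =>
    rw [maff_insert]
    rcases ih with hst | hz
    · exact trunc_single _ _ hst
    · right
      rw [hz, maff_zero]

end ASM

end S13

/-- **Corollary (the multi-affine part of a stable polynomial is stable).**
Let `f` be a stable complex polynomial in `z_1,…,z_d` and let `f_ma` be its
multi-affine part: the sum of the terms of `f` whose monomials are square-free.
Then `f_ma` is stable or identically zero. -/
theorem stmt13 (d : ℕ) (f : MvPolynomial (Fin d) ℂ)
    (hf : ∀ z : Fin d → ℂ, (∀ j, 0 < (z j).im) → MvPolynomial.eval z f ≠ 0) :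
    (∀ z : Fin d → ℂ, (∀ j, 0 < (z j).im) →
        MvPolynomial.eval z
          (∑ m ∈ f.support.filter (fun m => ∀ j, m j ≤ 1),
            MvPolynomial.monomial m (f.coeff m)) ≠ 0) ∨
      (∑ m ∈ f.support.filter (fun m => ∀ j, m j ≤ 1),
          MvPolynomial.monomial m (f.coeff m)) = 0 := by
  have h := S13.trunc_all f hf Finset.univ
  have heq : S13.maff Finset.univ f
      = ∑ m ∈ f.support.filter (fun m => ∀ j, m j ≤ 1), MvPolynomial.monomial m (f.coeff m) := by
    rw [S13.maff]
    apply Finset.sum_congr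
    · apply Finset.filter_congr
      intro m _
      simp
    · intros; rfl
  rwa [heq] at h
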